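/- Let H be a Hopf algebra and γ : H → k a normalized convolution-invertible lazy map that is neat, i.e. γ(ab₁)γ(b₂c) = γ(b₁c)γ(ab₂) for all a,b,c ∈ H. Then D¹(γ)(h,h') := γ(h₁)γ(h'₁)γ⁻¹(h₂h'₂) is a neat lazy 2-cocycle: it is a normalized convolution-invertible lazy left 2-cocycle satisfying D¹(γ)(a,b₁)D¹(γ)(b₂,c) = D¹(γ)(b₁,c)D¹(γ)(a,b₂) for all a,b,c ∈ H. -/

import Mathlib

open TensorProduct

noncomputable section

universe u

section Defs

variable {k : Type u} [CommRing k] {H : Type u} [Ring H] [Bialgebra k H]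

/-- Convolution product on the dual of a coalgebra. -/
def conv {C : Type u} [AddCommGroup C] [Module k C] [Coalgebra k C]
    (f g : C →ₗ[k] k) : C →ₗ[k] k :=
  LinearMap.mul' k k ∘ₗ TensorProduct.map f g ∘ₗ Coalgebra.comul

/-- `a ⊗ b ↦ a · ε(b)`. -/
def pr1 : H ⊗[k] H →ₗ[k] H :=
  (TensorProduct.rid k H).toLinearMap ∘ₗ TensorProduct.map LinearMap.id Coalgebra.counit

/-- `a ⊗ (b ⊗ c) ↦ ε(a) · (b ⊗ c)`. -/
def dropL3 : H ⊗[k] (H ⊗[k] H) →ₗ[k] H ⊗[k] H :=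
  (TensorProduct.lid k (H ⊗[k] H)).toLinearMap ∘ₗ TensorProduct.map Coalgebra.counit LinearMap.id

/-- Multiplication of `H` as a linear map `H ⊗ H → H`. -/
def mulH : H ⊗[k] H →ₗ[k] H := LinearMap.mul' k H

/-- `σ` is normalized: `σ(1,h) = ε(h) = σ(h,1)`. -/
def Normalized (σ : H ⊗[k] H →ₗ[k] k) : Prop :=
  ∀ h : H, σ (1 ⊗ₜ[k] h) = Coalgebra.counit (R := k) h ∧
    σ (h ⊗ₜ[k] 1) = Coalgebra.counit (R := k) h

/-- Left 2-cocycle condition: `σ(a₁,b₁)σ(a₂b₂,c) = σ(b₁,c₁)σ(a,b₂c₂)`, expressed as an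
equality of linear functionals on `H ⊗ (H ⊗ H)` (convolution of the indicated factors). -/
def IsLeftCocycle (σ : H ⊗[k] H →ₗ[k] k) : Prop :=
  conv (σ ∘ₗ TensorProduct.map LinearMap.id pr1)
      (σ ∘ₗ TensorProduct.map mulH LinearMap.id ∘ₗ (TensorProduct.assoc k H H H).symm.toLinearMap)
  = conv (σ ∘ₗ dropL3) (σ ∘ₗ TensorProduct.map LinearMap.id mulH)

/-- Right 2-cocycle condition: `σ(a₁b₁,c)σ(a₂,b₂) = σ(a,b₁c₁)σ(b₂,c₂)`. -/
def IsRightCocycle (σ : H ⊗[k] H →ₗ[k] k) : Prop :=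
  conv (σ ∘ₗ TensorProduct.map mulH LinearMap.id ∘ₗ (TensorProduct.assoc k H H H).symm.toLinearMap)
      (σ ∘ₗ TensorProduct.map LinearMap.id pr1)
  = conv (σ ∘ₗ TensorProduct.map LinearMap.id mulH) (σ ∘ₗ dropL3)

/-- Laziness for `σ : H ⊗ H → k`: `σ(h₁,h'₁)h₂h'₂ = h₁h'₁σ(h₂,h'₂)`. -/
def IsLazy2 (σ : H ⊗[k] H →ₗ[k] k) : Prop :=
  (TensorProduct.lid k H).toLinearMap ∘ₗ TensorProduct.map σ mulH ∘ₗ Coalgebra.comul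
  = (TensorProduct.rid k H).toLinearMap ∘ₗ TensorProduct.map mulH σ ∘ₗ Coalgebra.comul

/-- Laziness for `γ : H → k`: `γ(h₁)h₂ = h₁γ(h₂)`. -/
def IsLazy1 (γ : H →ₗ[k] k) : Prop :=
  (TensorProduct.lid k H).toLinearMap ∘ₗ TensorProduct.map γ LinearMap.id ∘ₗ Coalgebra.comul
  = (TensorProduct.rid k H).toLinearMap ∘ₗ TensorProduct.map LinearMap.id γ ∘ₗ Coalgebra.comul

/-- Neatness: `σ(a,b₁)σ(b₂,c) = σ(b₁,c)σ(a,b₂)`. -/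
def Neat2 (σ : H ⊗[k] H →ₗ[k] k) : Prop :=
  conv (σ ∘ₗ TensorProduct.map LinearMap.id pr1) (σ ∘ₗ dropL3)
  = conv (σ ∘ₗ dropL3) (σ ∘ₗ TensorProduct.map LinearMap.id pr1)

/-- `a ⊗ (b ⊗ (c ⊗ d)) ↦ ε(a) (b ⊗ (c ⊗ d))`. -/
def dropL4 : H ⊗[k] (H ⊗[k] (H ⊗[k] H)) →ₗ[k] H ⊗[k] (H ⊗[k] H) :=
  (TensorProduct.lid k (H ⊗[k] (H ⊗[k] H))).toLinearMap ∘ₗ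
    TensorProduct.map Coalgebra.counit LinearMap.id

/-- `(a,b,c,d) ↦ σ(ab, c) ε(d)`. -/
def fPure (σ : H ⊗[k] H →ₗ[k] k) : H ⊗[k] (H ⊗[k] (H ⊗[k] H)) →ₗ[k] k :=
  σ ∘ₗ TensorProduct.map mulH LinearMap.id ∘ₗ (TensorProduct.assoc k H H H).symm.toLinearMap ∘ₗ
    TensorProduct.map LinearMap.id (TensorProduct.map LinearMap.id pr1)

/-- `(a,b,c,d) ↦ ε(a) τ(b, c) ε(d)`. -/
def gPure (τ : H ⊗[k] H →ₗ[k] k) : H ⊗[k] (H ⊗[k] (H ⊗[k] H)) →ₗ[k] k :=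
  τ ∘ₗ TensorProduct.map LinearMap.id pr1 ∘ₗ dropL4

/-- `(a,b,c,d) ↦ ε(a) σ(b, cd)`. -/
def hPure (σ : H ⊗[k] H →ₗ[k] k) : H ⊗[k] (H ⊗[k] (H ⊗[k] H)) →ₗ[k] k :=
  σ ∘ₗ TensorProduct.map LinearMap.id mulH ∘ₗ dropL4

/-- Purity for a map `σ` with convolution inverse `τ = σ⁻¹`:
`σ(ab₁,c₁)σ⁻¹(b₂,c₂)σ(b₃,c₃d) = σ(b₁,c₁d)σ⁻¹(b₂,c₂)σ(ab₃,c₃)`. -/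
def Pure2 (σ τ : H ⊗[k] H →ₗ[k] k) : Prop :=
  conv (C := H ⊗[k] (H ⊗[k] (H ⊗[k] H))) (conv (fPure σ) (gPure τ)) (hPure σ)
  = conv (C := H ⊗[k] (H ⊗[k] (H ⊗[k] H))) (conv (hPure σ) (gPure τ)) (fPure σ)

/-- `D¹(γ)(h,h') = γ(h₁)γ(h'₁)γinv(h₂h'₂)` where `γinv` is the convolution inverse of `γ`. -/
def D1 (γ γinv : H →ₗ[k] k) : H ⊗[k] H →ₗ[k] k :=
  conv (LinearMap.mul' k k ∘ₗ TensorProduct.map γ γ) (γinv ∘ₗ mulH)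

/-- The deformed product `h ·σ h' = σ(h₁,h'₁) h₂h'₂`. -/
def mulSig (σ : H ⊗[k] H →ₗ[k] k) : H ⊗[k] H →ₗ[k] H :=
  (TensorProduct.lid k H).toLinearMap ∘ₗ TensorProduct.map σ mulH ∘ₗ Coalgebra.comul

/-- Neatness for `γ : H → k`: `γ(ab₁)γ(b₂c) = γ(b₁c)γ(ab₂)`. -/
def Neat1 (γ : H →ₗ[k] k) : Prop :=
  conv (γ ∘ₗ mulH ∘ₗ TensorProduct.map LinearMap.id pr1) (γ ∘ₗ mulH ∘ₗ dropL3)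
  = conv (γ ∘ₗ mulH ∘ₗ dropL3) (γ ∘ₗ mulH ∘ₗ TensorProduct.map LinearMap.id pr1)

/-- `γ ∈ Reg¹(H)`: normalized and convolution invertible. -/
def Reg1 (γ : H →ₗ[k] k) : Prop :=
  γ 1 = 1 ∧ ∃ δ : H →ₗ[k] k, conv γ δ = (Coalgebra.counit : H →ₗ[k] k) ∧
    conv δ γ = (Coalgebra.counit : H →ₗ[k] k)

/-- `σ ∈ Reg²(H)`: normalized and convolution invertible. -/
def Reg2 (σ : H ⊗[k] H →ₗ[k] k) : Prop :=
  Normalized σ ∧ ∃ τ : H ⊗[k] H →ₗ[k] k,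
    conv σ τ = (Coalgebra.counit : H ⊗[k] H →ₗ[k] k) ∧
    conv τ σ = (Coalgebra.counit : H ⊗[k] H →ₗ[k] k)

/-- `a ⊗ b ↦ γ(a b₁) b₂`. -/
def stmt17L (γ : H →ₗ[k] k) : H ⊗[k] H →ₗ[k] H :=
  (TensorProduct.lid k H).toLinearMap ∘ₗ TensorProduct.map (γ ∘ₗ mulH) LinearMap.id ∘ₗ
    (TensorProduct.assoc k H H H).symm.toLinearMap ∘ₗ
      TensorProduct.map LinearMap.id Coalgebra.comul

/-- `a ⊗ b ↦ γ(a b₂) b₁`. -/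
def stmt17R (γ : H →ₗ[k] k) : H ⊗[k] H →ₗ[k] H :=
  (TensorProduct.lid k H).toLinearMap ∘ₗ TensorProduct.map (γ ∘ₗ mulH) LinearMap.id ∘ₗ
    (TensorProduct.assoc k H H H).symm.toLinearMap ∘ₗ
      TensorProduct.map LinearMap.id
        ((TensorProduct.comm k H H).toLinearMap ∘ₗ Coalgebra.comul)

end Defs

set_option linter.unusedSectionVars false
set_option maxHeartbeats 1000000
section Tools

variable {k : Type u} [CommRing k]
variable {C D E M N : Type u}
  [AddCommGroup C] [Module k C] [Coalgebra k C]
  [AddCommGroup D] [Module k D] [Coalgebra k D]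
  [AddCommGroup E] [Module k E] [Coalgebra k E]
  [AddCommGroup M] [Module k M]
  [AddCommGroup N] [Module k N]

open Coalgebra

/-- left convolution action of a functional on a map. -/
def convl (F : C →ₗ[k] k) (g : C →ₗ[k] M) : C →ₗ[k] M :=
  (TensorProduct.lid k M).toLinearMap ∘ₗ TensorProduct.map F g ∘ₗ Coalgebra.comul

/-- right convolution action. -/
def convr (g : C →ₗ[k] M) (F : C →ₗ[k] k) : C →ₗ[k] M :=
  (TensorProduct.rid k M).toLinearMap ∘ₗ TensorProduct.map g F ∘ₗ Coalgebra.comul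

lemma convl_repr (F : C →ₗ[k] k) (g : C →ₗ[k] M) {a : C} {ι : Type*} (r : Coalgebra.Repr k a ι) :
    convl F g a = ∑ i ∈ r.index, F (r.left i) • g (r.right i) := by
  simp only [convl, LinearMap.comp_apply, ← r.eq, map_sum, TensorProduct.map_tmul,
    LinearEquiv.coe_coe, TensorProduct.lid_tmul]

lemma convr_repr (g : C →ₗ[k] M) (F : C →ₗ[k] k) {a : C} {ι : Type*} (r : Coalgebra.Repr k a ι) :
    convr g F a = ∑ i ∈ r.index, F (r.right i) • g (r.left i) := by
  simp only [convr, LinearMap.comp_apply, ← r.eq, map_sum, TensorProduct.map_tmul,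
    LinearEquiv.coe_coe, TensorProduct.rid_tmul]

lemma conv_repr (f g : C →ₗ[k] k) {a : C} {ι : Type*} (r : Coalgebra.Repr k a ι) :
    conv f g a = ∑ i ∈ r.index, f (r.left i) * g (r.right i) := by
  simp only [conv, LinearMap.comp_apply, ← r.eq, map_sum, TensorProduct.map_tmul,
    LinearMap.mul'_apply]

lemma conv_eq_convl (f g : C →ₗ[k] k) : conv f g = convl f g := by
  ext a
  rw [conv_repr f g (Coalgebra.Repr.arbitrary k a), convl_repr f g (Coalgebra.Repr.arbitrary k a)]
  simp [smul_eq_mul]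

lemma conv_eq_convr (f g : C →ₗ[k] k) : conv f g = convr f g := by
  ext a
  rw [conv_repr f g (Coalgebra.Repr.arbitrary k a), convr_repr f g (Coalgebra.Repr.arbitrary k a)]
  simp [smul_eq_mul, mul_comm]

/-- helper: `∑ ε(lᵢ) • rᵢ = a`. -/
lemma sum_counit_smul {a : C} {ι : Type*} (r : Coalgebra.Repr k a ι) :
    ∑ i ∈ r.index, Coalgebra.counit (R := k) (r.left i) • r.right i = a := by
  have h := Coalgebra.sum_counit_tmul_eq r
  apply_fun (TensorProduct.lid k C) at h
  simp only [map_sum, TensorProduct.lid_tmul, one_smul] at h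
  exact h

lemma sum_smul_counit {a : C} {ι : Type*} (r : Coalgebra.Repr k a ι) :
    ∑ i ∈ r.index, Coalgebra.counit (R := k) (r.right i) • r.left i = a := by
  have h := Coalgebra.sum_tmul_counit_eq r
  apply_fun (TensorProduct.rid k C) at h
  simp only [map_sum, TensorProduct.rid_tmul, one_smul] at h
  exact h

lemma convl_counit (g : C →ₗ[k] M) : convl (Coalgebra.counit) g = g := by
  ext a
  rw [convl_repr _ g (Coalgebra.Repr.arbitrary k a)]
  simp only [← map_smul, ← map_sum]
  rw [_root_.sum_counit_smul]

lemma convr_counit (g : C →ₗ[k] M) : convr g (Coalgebra.counit) = g := by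
  ext a
  rw [convr_repr g _ (Coalgebra.Repr.arbitrary k a)]
  simp only [← map_smul, ← map_sum]
  rw [sum_smul_counit]

/-- mixed associativity A1 -/
lemma convl_conv (σ τ : C →ₗ[k] k) (g : C →ₗ[k] M) :
    convl (conv σ τ) g = convl σ (convl τ g) := by
  ext a
  set r := Coalgebra.Repr.arbitrary k a
  set r1 : ∀ i : r.ι, Coalgebra.Repr k (r.left i) (C × C) := fun i => Coalgebra.Repr.arbitrary k _
  set r2 : ∀ i : r.ι, Coalgebra.Repr k (r.right i) (C × C) := fun i => Coalgebra.Repr.arbitrary k _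
  have h := Coalgebra.sum_tmul_tmul_eq r r1 r2
  have h2 := congrArg ((TensorProduct.lid k M).toLinearMap ∘ₗ
    TensorProduct.map σ ((TensorProduct.lid k M).toLinearMap ∘ₗ TensorProduct.map τ g)) h
  simp only [map_sum, LinearMap.comp_apply, TensorProduct.map_tmul, LinearEquiv.coe_coe,
    TensorProduct.lid_tmul] at h2
  rw [convl_repr _ g r, convl_repr σ _ r]
  calc ∑ i ∈ r.index, conv σ τ (r.left i) • g (r.right i)
      = ∑ i ∈ r.index, ∑ j ∈ (r1 i).index,
          σ ((r1 i).left j) • (τ ((r1 i).right j) • g (r.right i)) := by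
        refine Finset.sum_congr rfl fun i _ => ?_
        rw [conv_repr σ τ (r1 i), Finset.sum_smul]
        exact Finset.sum_congr rfl fun j _ => (mul_smul _ _ _)
    _ = ∑ i ∈ r.index, ∑ j ∈ (r2 i).index,
          σ (r.left i) • (τ ((r2 i).left j) • g ((r2 i).right j)) := h2
    _ = ∑ i ∈ r.index, σ (r.left i) • convl τ g (r.right i) := by
        refine Finset.sum_congr rfl fun i _ => ?_
        rw [convl_repr τ g (r2 i), Finset.smul_sum]

/-- mixed associativity A2 -/
lemma convr_conv (g : C →ₗ[k] M) (σ τ : C →ₗ[k] k) :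
    convr g (conv σ τ) = convr (convr g σ) τ := by
  ext a
  set r := Coalgebra.Repr.arbitrary k a
  set r1 : ∀ i : r.ι, Coalgebra.Repr k (r.left i) (C × C) := fun i => Coalgebra.Repr.arbitrary k _
  set r2 : ∀ i : r.ι, Coalgebra.Repr k (r.right i) (C × C) := fun i => Coalgebra.Repr.arbitrary k _
  have h := Coalgebra.sum_tmul_tmul_eq r r1 r2
  have h2 := congrArg ((TensorProduct.rid k M).toLinearMap ∘ₗ
    TensorProduct.map g (LinearMap.mul' k k ∘ₗ TensorProduct.map σ τ)) h
  simp only [map_sum, LinearMap.comp_apply, TensorProduct.map_tmul, LinearEquiv.coe_coe,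
    TensorProduct.rid_tmul, LinearMap.mul'_apply] at h2
  rw [convr_repr g _ r, convr_repr _ τ r]
  calc ∑ i ∈ r.index, conv σ τ (r.right i) • g (r.left i)
      = ∑ i ∈ r.index, ∑ j ∈ (r2 i).index,
          (σ ((r2 i).left j) * τ ((r2 i).right j)) • g (r.left i) := by
        refine Finset.sum_congr rfl fun i _ => ?_
        rw [conv_repr σ τ (r2 i), Finset.sum_smul]
    _ = ∑ i ∈ r.index, ∑ j ∈ (r1 i).index,
          (σ ((r1 i).right j) * τ (r.right i)) • g ((r1 i).left j) := h2.symm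
    _ = ∑ i ∈ r.index, τ (r.right i) • convr g σ (r.left i) := by
        refine Finset.sum_congr rfl fun i _ => ?_
        rw [convr_repr g σ (r1 i), Finset.smul_sum]
        refine Finset.sum_congr rfl fun j _ => ?_
        rw [mul_comm, mul_smul]

/-- middle exchange A3 -/
lemma convl_convr (σ τ : C →ₗ[k] k) (g : C →ₗ[k] M) :
    convl σ (convr g τ) = convr (convl σ g) τ := by
  ext a
  set r := Coalgebra.Repr.arbitrary k a
  set r1 : ∀ i : r.ι, Coalgebra.Repr k (r.left i) (C × C) := fun i => Coalgebra.Repr.arbitrary k _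
  set r2 : ∀ i : r.ι, Coalgebra.Repr k (r.right i) (C × C) := fun i => Coalgebra.Repr.arbitrary k _
  have h := Coalgebra.sum_tmul_tmul_eq r r1 r2
  have h2 := congrArg ((TensorProduct.lid k M).toLinearMap ∘ₗ
    TensorProduct.map σ ((TensorProduct.rid k M).toLinearMap ∘ₗ TensorProduct.map g τ)) h
  simp only [map_sum, LinearMap.comp_apply, TensorProduct.map_tmul, LinearEquiv.coe_coe,
    TensorProduct.lid_tmul, TensorProduct.rid_tmul] at h2
  rw [convl_repr σ _ r, convr_repr _ τ r]
  calc ∑ i ∈ r.index, σ (r.left i) • convr g τ (r.right i)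
      = ∑ i ∈ r.index, ∑ j ∈ (r2 i).index,
          σ (r.left i) • (τ ((r2 i).right j) • g ((r2 i).left j)) := by
        refine Finset.sum_congr rfl fun i _ => ?_
        rw [convr_repr g τ (r2 i), Finset.smul_sum]
    _ = ∑ i ∈ r.index, ∑ j ∈ (r1 i).index,
          σ ((r1 i).left j) • (τ (r.right i) • g ((r1 i).right j)) := by
        rw [← h2]
    _ = ∑ i ∈ r.index, τ (r.right i) • convl σ g (r.left i) := by
        refine Finset.sum_congr rfl fun i _ => ?_
        rw [convl_repr σ g (r1 i), Finset.smul_sum]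
        refine Finset.sum_congr rfl fun j _ => ?_
        rw [smul_comm]

lemma conv_assoc (f g h : C →ₗ[k] k) : conv (conv f g) h = conv f (conv g h) := by
  rw [conv_eq_convl, conv_eq_convl f (conv g h), convl_conv, conv_eq_convl g h]

lemma conv_counit_left (f : C →ₗ[k] k) : conv Coalgebra.counit f = f := by
  rw [conv_eq_convl, convl_counit]

lemma conv_counit_right (f : C →ₗ[k] k) : conv f Coalgebra.counit = f := by
  rw [conv_eq_convr, convr_counit]

/-- naturality of convl in the second argument -/
lemma comp_convl (σ : C →ₗ[k] k) (g : C →ₗ[k] M) (μ : M →ₗ[k] N) :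
    μ ∘ₗ convl σ g = convl σ (μ ∘ₗ g) := by
  have hnat : μ ∘ₗ (TensorProduct.lid k M).toLinearMap
      = (TensorProduct.lid k N).toLinearMap ∘ₗ TensorProduct.map LinearMap.id μ := by
    ext m; simp
  simp only [convl, ← LinearMap.comp_assoc, hnat]
  congr 1
  rw [LinearMap.comp_assoc, ← TensorProduct.map_comp]
  simp

lemma comp_convr (σ : C →ₗ[k] k) (g : C →ₗ[k] M) (μ : M →ₗ[k] N) :
    μ ∘ₗ convr g σ = convr (μ ∘ₗ g) σ := by
  have hnat : μ ∘ₗ (TensorProduct.rid k M).toLinearMap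
      = (TensorProduct.rid k N).toLinearMap ∘ₗ TensorProduct.map μ LinearMap.id := by
    ext m; simp
  simp only [convr, ← LinearMap.comp_assoc, hnat]
  congr 1
  rw [LinearMap.comp_assoc, ← TensorProduct.map_comp]
  simp

/-- a coalgebra map -/
structure IsCoalgMap (φ : C →ₗ[k] D) : Prop where
  comul_comp : Coalgebra.comul ∘ₗ φ = TensorProduct.map φ φ ∘ₗ Coalgebra.comul
  counit_comp : (Coalgebra.counit : D →ₗ[k] k) ∘ₗ φ = Coalgebra.counit

lemma IsCoalgMap.id : IsCoalgMap (LinearMap.id : C →ₗ[k] C) := by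
  constructor <;> simp [TensorProduct.map_id]

lemma IsCoalgMap.comp {φ : C →ₗ[k] D} {ψ : D →ₗ[k] E} (hψ : IsCoalgMap ψ) (hφ : IsCoalgMap φ) :
    IsCoalgMap (ψ ∘ₗ φ) := by
  constructor
  · rw [← LinearMap.comp_assoc, hψ.comul_comp, LinearMap.comp_assoc, hφ.comul_comp,
      ← LinearMap.comp_assoc, ← TensorProduct.map_comp]
  · rw [← LinearMap.comp_assoc, hψ.counit_comp, hφ.counit_comp]

lemma convl_comp {φ : C →ₗ[k] D} (hφ : IsCoalgMap φ) (σ : D →ₗ[k] k) (g : D →ₗ[k] M) :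
    convl σ g ∘ₗ φ = convl (σ ∘ₗ φ) (g ∘ₗ φ) := by
  simp only [convl, LinearMap.comp_assoc, hφ.comul_comp]
  congr 1
  rw [← LinearMap.comp_assoc, ← TensorProduct.map_comp]

lemma convr_comp {φ : C →ₗ[k] D} (hφ : IsCoalgMap φ) (σ : D →ₗ[k] k) (g : D →ₗ[k] M) :
    convr g σ ∘ₗ φ = convr (g ∘ₗ φ) (σ ∘ₗ φ) := by
  simp only [convr, LinearMap.comp_assoc, hφ.comul_comp]
  congr 1
  rw [← LinearMap.comp_assoc, ← TensorProduct.map_comp]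

lemma conv_comp {φ : C →ₗ[k] D} (hφ : IsCoalgMap φ) (f g : D →ₗ[k] k) :
    conv f g ∘ₗ φ = conv (f ∘ₗ φ) (g ∘ₗ φ) := by
  simp only [conv, LinearMap.comp_assoc, hφ.comul_comp]
  congr 1
  rw [← LinearMap.comp_assoc, ← TensorProduct.map_comp]

end Tools
section Tools2

variable {k : Type u} [CommRing k]
variable {C D E M N : Type u}
  [AddCommGroup C] [Module k C] [Coalgebra k C]
  [AddCommGroup D] [Module k D] [Coalgebra k D]
  [AddCommGroup E] [Module k E] [Coalgebra k E]
  [AddCommGroup M] [Module k M]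
  [AddCommGroup N] [Module k N]

open Coalgebra

/-- `σ(h₁)h₂ = h₁σ(h₂)` -/
def IsLazyF (σ : C →ₗ[k] k) : Prop := convl σ LinearMap.id = convr LinearMap.id σ

lemma IsLazyF.rel {σ : C →ₗ[k] k} (h : IsLazyF σ) (μ : C →ₗ[k] M) :
    convl σ μ = convr μ σ := by
  have h1 := comp_convl σ LinearMap.id μ
  have h2 := comp_convr σ LinearMap.id μ
  rw [LinearMap.comp_id] at h1 h2
  rw [← h1, h, h2]

lemma IsLazyF.comm {σ : C →ₗ[k] k} (h : IsLazyF σ) (G : C →ₗ[k] k) :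
    conv σ G = conv G σ := by
  rw [conv_eq_convl, conv_eq_convr G σ, h.rel]

lemma IsLazyF.convMul {σ τ : C →ₗ[k] k} (hσ : IsLazyF σ) (hτ : IsLazyF τ) :
    IsLazyF (conv σ τ) := by
  unfold IsLazyF
  rw [convl_conv, hτ.rel, convl_convr, hσ.rel, ← convr_conv]

lemma IsLazyF.of_inv {σ τ : C →ₗ[k] k} (hσ : IsLazyF σ)
    (h1 : _root_.conv σ τ = (Coalgebra.counit : C →ₗ[k] k))
    (h2 : _root_.conv τ σ = (Coalgebra.counit : C →ₗ[k] k)) : IsLazyF τ := by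
  unfold IsLazyF
  calc convl τ LinearMap.id = convl τ (convr LinearMap.id (_root_.conv σ τ)) := by
        rw [h1, convr_counit]
    _ = convl τ (convr (convl σ LinearMap.id) τ) := by rw [convr_conv, ← hσ]
    _ = convr (convl τ (convl σ LinearMap.id)) τ := by rw [convl_convr]
    _ = convr LinearMap.id τ := by rw [← convl_conv, h2, convl_counit]

/-- transfer of relative laziness along a coalgebra map -/
lemma rel_comp {φ : C →ₗ[k] D} (hφ : IsCoalgMap φ) {σ : D →ₗ[k] k} {μ : D →ₗ[k] M}
    (hrel : convl σ μ = convr μ σ) :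
    convl (σ ∘ₗ φ) (μ ∘ₗ φ) = convr (μ ∘ₗ φ) (σ ∘ₗ φ) := by
  rw [← convl_comp hφ, hrel, convr_comp hφ]

/-- `a ⊗ b ↦ ε(b) • a` -/
def prL : C ⊗[k] D →ₗ[k] C :=
  (TensorProduct.rid k C).toLinearMap ∘ₗ TensorProduct.map LinearMap.id Coalgebra.counit

/-- `a ⊗ b ↦ ε(a) • b` -/
def prR : C ⊗[k] D →ₗ[k] D :=
  (TensorProduct.lid k D).toLinearMap ∘ₗ TensorProduct.map Coalgebra.counit LinearMap.id

@[simp] lemma prL_tmul (a : C) (b : D) :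
    (prL (a ⊗ₜ[k] b)) = Coalgebra.counit (R := k) b • a := by simp [prL]

@[simp] lemma prR_tmul (a : C) (b : D) :
    (prR (a ⊗ₜ[k] b)) = Coalgebra.counit (R := k) a • b := by simp [prR]

lemma comul_tmul (a : C) (b : D) :
    Coalgebra.comul (R := k) (a ⊗ₜ[k] b) =
      TensorProduct.tensorTensorTensorComm k C C D D
        (Coalgebra.comul (R := k) a ⊗ₜ[k] Coalgebra.comul (R := k) b) := by
  rfl

lemma counit_tmul (a : C) (b : D) :
    Coalgebra.counit (R := k) (a ⊗ₜ[k] b) =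
      Coalgebra.counit (R := k) a * Coalgebra.counit (R := k) b := by
  rw [TensorProduct.counit_tmul, smul_eq_mul, mul_comm]

lemma convl_tmul_repr (F : C ⊗[k] D →ₗ[k] k) (g : C ⊗[k] D →ₗ[k] M) {a : C} {b : D}
    {ι κ : Type*} (ra : Coalgebra.Repr k a ι) (rb : Coalgebra.Repr k b κ) :
    convl F g (a ⊗ₜ[k] b) = ∑ i ∈ ra.index, ∑ j ∈ rb.index,
      F (ra.left i ⊗ₜ[k] rb.left j) • g (ra.right i ⊗ₜ[k] rb.right j) := by
  simp only [convl, LinearMap.comp_apply, _root_.comul_tmul, ← ra.eq, ← rb.eq,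
    TensorProduct.sum_tmul, TensorProduct.tmul_sum, map_sum,
    TensorProduct.tensorTensorTensorComm_tmul, TensorProduct.map_tmul,
    LinearEquiv.coe_coe, TensorProduct.lid_tmul]
  rw [Finset.sum_comm]

lemma convr_tmul_repr (F : C ⊗[k] D →ₗ[k] k) (g : C ⊗[k] D →ₗ[k] M) {a : C} {b : D}
    {ι κ : Type*} (ra : Coalgebra.Repr k a ι) (rb : Coalgebra.Repr k b κ) :
    convr g F (a ⊗ₜ[k] b) = ∑ i ∈ ra.index, ∑ j ∈ rb.index,
      F (ra.right i ⊗ₜ[k] rb.right j) • g (ra.left i ⊗ₜ[k] rb.left j) := by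
  simp only [convr, LinearMap.comp_apply, _root_.comul_tmul, ← ra.eq, ← rb.eq,
    TensorProduct.sum_tmul, TensorProduct.tmul_sum, map_sum,
    TensorProduct.tensorTensorTensorComm_tmul, TensorProduct.map_tmul,
    LinearEquiv.coe_coe, TensorProduct.rid_tmul]
  rw [Finset.sum_comm]

lemma conv_tmul_repr (F G : C ⊗[k] D →ₗ[k] k) {a : C} {b : D}
    {ι κ : Type*} (ra : Coalgebra.Repr k a ι) (rb : Coalgebra.Repr k b κ) :
    conv F G (a ⊗ₜ[k] b) = ∑ i ∈ ra.index, ∑ j ∈ rb.index,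
      F (ra.left i ⊗ₜ[k] rb.left j) * G (ra.right i ⊗ₜ[k] rb.right j) := by
  simp only [conv, LinearMap.comp_apply, _root_.comul_tmul, ← ra.eq, ← rb.eq,
    TensorProduct.sum_tmul, TensorProduct.tmul_sum, map_sum,
    TensorProduct.tensorTensorTensorComm_tmul, TensorProduct.map_tmul,
    LinearMap.mul'_apply]
  rw [Finset.sum_comm]

lemma convl_prR (F : D →ₗ[k] k) :
    convl (F ∘ₗ (prR : C ⊗[k] D →ₗ[k] D)) LinearMap.id
      = TensorProduct.map LinearMap.id (convl F LinearMap.id) := by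
  apply TensorProduct.ext'
  intro a b
  set ra := Coalgebra.Repr.arbitrary k a
  set rb := Coalgebra.Repr.arbitrary k b
  rw [convl_tmul_repr _ _ ra rb]
  simp only [LinearMap.comp_apply, prR_tmul, map_smul, smul_eq_mul, LinearMap.id_coe, id_eq,
    TensorProduct.map_tmul]
  rw [convl_repr _ _ rb]
  simp only [LinearMap.id_coe, id_eq]
  calc ∑ i ∈ ra.index, ∑ j ∈ rb.index,
        (Coalgebra.counit (R := k) (ra.left i) * F (rb.left j)) •
          (ra.right i ⊗ₜ[k] rb.right j)
      = ∑ i ∈ ra.index, Coalgebra.counit (R := k) (ra.left i) •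
          (ra.right i ⊗ₜ[k] ∑ j ∈ rb.index, F (rb.left j) • rb.right j) := by
        refine Finset.sum_congr rfl fun i _ => ?_
        rw [TensorProduct.tmul_sum, Finset.smul_sum]
        refine Finset.sum_congr rfl fun j _ => ?_
        rw [TensorProduct.tmul_smul, smul_smul]
    _ = (∑ i ∈ ra.index, Coalgebra.counit (R := k) (ra.left i) • ra.right i) ⊗ₜ[k]
          (∑ j ∈ rb.index, F (rb.left j) • rb.right j) := by
        rw [TensorProduct.sum_tmul]
        exact Finset.sum_congr rfl fun i _ => (TensorProduct.smul_tmul' _ _ _).symm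
    _ = a ⊗ₜ[k] ∑ j ∈ rb.index, F (rb.left j) • rb.right j := by rw [_root_.sum_counit_smul ra]

lemma convr_prR (F : D →ₗ[k] k) :
    convr LinearMap.id (F ∘ₗ (prR : C ⊗[k] D →ₗ[k] D))
      = TensorProduct.map LinearMap.id (convr LinearMap.id F) := by
  apply TensorProduct.ext'
  intro a b
  set ra := Coalgebra.Repr.arbitrary k a
  set rb := Coalgebra.Repr.arbitrary k b
  rw [convr_tmul_repr _ _ ra rb]
  simp only [LinearMap.comp_apply, prR_tmul, map_smul, smul_eq_mul, LinearMap.id_coe, id_eq,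
    TensorProduct.map_tmul]
  rw [convr_repr _ _ rb]
  simp only [LinearMap.id_coe, id_eq]
  calc ∑ i ∈ ra.index, ∑ j ∈ rb.index,
        (Coalgebra.counit (R := k) (ra.right i) * F (rb.right j)) •
          (ra.left i ⊗ₜ[k] rb.left j)
      = ∑ i ∈ ra.index, Coalgebra.counit (R := k) (ra.right i) •
          (ra.left i ⊗ₜ[k] ∑ j ∈ rb.index, F (rb.right j) • rb.left j) := by
        refine Finset.sum_congr rfl fun i _ => ?_
        rw [TensorProduct.tmul_sum, Finset.smul_sum]
        refine Finset.sum_congr rfl fun j _ => ?_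
        rw [TensorProduct.tmul_smul, smul_smul]
    _ = (∑ i ∈ ra.index, Coalgebra.counit (R := k) (ra.right i) • ra.left i) ⊗ₜ[k]
          (∑ j ∈ rb.index, F (rb.right j) • rb.left j) := by
        rw [TensorProduct.sum_tmul]
        exact Finset.sum_congr rfl fun i _ => (TensorProduct.smul_tmul' _ _ _).symm
    _ = a ⊗ₜ[k] ∑ j ∈ rb.index, F (rb.right j) • rb.left j := by rw [sum_smul_counit ra]

lemma convl_prL (F : C →ₗ[k] k) :
    convl (F ∘ₗ (prL : C ⊗[k] D →ₗ[k] C)) LinearMap.id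
      = TensorProduct.map (convl F LinearMap.id) LinearMap.id := by
  apply TensorProduct.ext'
  intro a b
  set ra := Coalgebra.Repr.arbitrary k a
  set rb := Coalgebra.Repr.arbitrary k b
  rw [convl_tmul_repr _ _ ra rb]
  simp only [LinearMap.comp_apply, prL_tmul, map_smul, smul_eq_mul, LinearMap.id_coe, id_eq,
    TensorProduct.map_tmul]
  rw [convl_repr _ _ ra]
  simp only [LinearMap.id_coe, id_eq]
  calc ∑ i ∈ ra.index, ∑ j ∈ rb.index,
        (Coalgebra.counit (R := k) (rb.left j) * F (ra.left i)) •
          (ra.right i ⊗ₜ[k] rb.right j)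
      = ∑ i ∈ ra.index, F (ra.left i) •
          (ra.right i ⊗ₜ[k] ∑ j ∈ rb.index, Coalgebra.counit (R := k) (rb.left j) • rb.right j) := by
        refine Finset.sum_congr rfl fun i _ => ?_
        rw [TensorProduct.tmul_sum, Finset.smul_sum]
        refine Finset.sum_congr rfl fun j _ => ?_
        rw [TensorProduct.tmul_smul, smul_smul, mul_comm]
    _ = (∑ i ∈ ra.index, F (ra.left i) • ra.right i) ⊗ₜ[k]
          (∑ j ∈ rb.index, Coalgebra.counit (R := k) (rb.left j) • rb.right j) := by
        rw [TensorProduct.sum_tmul]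
        exact Finset.sum_congr rfl fun i _ => (TensorProduct.smul_tmul' _ _ _).symm
    _ = (∑ i ∈ ra.index, F (ra.left i) • ra.right i) ⊗ₜ[k] b := by rw [_root_.sum_counit_smul rb]

lemma convr_prL (F : C →ₗ[k] k) :
    convr LinearMap.id (F ∘ₗ (prL : C ⊗[k] D →ₗ[k] C))
      = TensorProduct.map (convr LinearMap.id F) LinearMap.id := by
  apply TensorProduct.ext'
  intro a b
  set ra := Coalgebra.Repr.arbitrary k a
  set rb := Coalgebra.Repr.arbitrary k b
  rw [convr_tmul_repr _ _ ra rb]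
  simp only [LinearMap.comp_apply, prL_tmul, map_smul, smul_eq_mul, LinearMap.id_coe, id_eq,
    TensorProduct.map_tmul]
  rw [convr_repr _ _ ra]
  simp only [LinearMap.id_coe, id_eq]
  calc ∑ i ∈ ra.index, ∑ j ∈ rb.index,
        (Coalgebra.counit (R := k) (rb.right j) * F (ra.right i)) •
          (ra.left i ⊗ₜ[k] rb.left j)
      = ∑ i ∈ ra.index, F (ra.right i) •
          (ra.left i ⊗ₜ[k] ∑ j ∈ rb.index, Coalgebra.counit (R := k) (rb.right j) • rb.left j) := by
        refine Finset.sum_congr rfl fun i _ => ?_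
        rw [TensorProduct.tmul_sum, Finset.smul_sum]
        refine Finset.sum_congr rfl fun j _ => ?_
        rw [TensorProduct.tmul_smul, smul_smul, mul_comm]
    _ = (∑ i ∈ ra.index, F (ra.right i) • ra.left i) ⊗ₜ[k]
          (∑ j ∈ rb.index, Coalgebra.counit (R := k) (rb.right j) • rb.left j) := by
        rw [TensorProduct.sum_tmul]
        exact Finset.sum_congr rfl fun i _ => (TensorProduct.smul_tmul' _ _ _).symm
    _ = (∑ i ∈ ra.index, F (ra.right i) • ra.left i) ⊗ₜ[k] b := by rw [sum_smul_counit rb]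

lemma IsLazyF.compPrR {F : D →ₗ[k] k} (hF : IsLazyF F) :
    IsLazyF (F ∘ₗ (prR : C ⊗[k] D →ₗ[k] D)) := by
  unfold IsLazyF
  rw [convl_prR, convr_prR, hF]

lemma IsLazyF.compPrL {F : C →ₗ[k] k} (hF : IsLazyF F) :
    IsLazyF (F ∘ₗ (prL : C ⊗[k] D →ₗ[k] C)) := by
  unfold IsLazyF
  rw [convl_prL, convr_prL, hF]

end Tools2
section Tools3

variable {k : Type u} [CommRing k]
variable {C D E M N : Type u}
  [AddCommGroup C] [Module k C] [Coalgebra k C]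
  [AddCommGroup D] [Module k D] [Coalgebra k D]
  [AddCommGroup E] [Module k E] [Coalgebra k E]
  [AddCommGroup M] [Module k M]
  [AddCommGroup N] [Module k N]

open Coalgebra

lemma IsCoalgMap.congr {φ ψ : C →ₗ[k] D} (h : φ = ψ) (hψ : IsCoalgMap ψ) : IsCoalgMap φ :=
  h ▸ hψ

lemma IsCoalgMap.ofCoalgHom (f : C →ₗc[k] D) : IsCoalgMap f.toLinearMap :=
  ⟨(CoalgHom.map_comp_comul f).symm, CoalgHom.counit_comp f⟩

lemma IsCoalgMap.prL : IsCoalgMap (prL : C ⊗[k] D →ₗ[k] C) := by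
  constructor
  · apply TensorProduct.ext'
    intro a b
    set ra := Coalgebra.Repr.arbitrary k a
    set rb := Coalgebra.Repr.arbitrary k b
    simp only [LinearMap.comp_apply, prL_tmul, map_smul, _root_.comul_tmul]
    rw [← ra.eq, ← rb.eq]
    simp only [TensorProduct.sum_tmul, TensorProduct.tmul_sum, map_sum,
      TensorProduct.tensorTensorTensorComm_tmul, TensorProduct.map_tmul, prL_tmul,
      TensorProduct.smul_tmul', TensorProduct.tmul_smul, smul_smul]
    have hb : Coalgebra.counit (R := k) b
        = ∑ j ∈ rb.index, Coalgebra.counit (R := k) (rb.right j) *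
            Coalgebra.counit (R := k) (rb.left j) := by
      conv_lhs => rw [← _root_.sum_counit_smul rb]
      simp [map_sum, smul_eq_mul, mul_comm]
    rw [Finset.sum_comm, Finset.smul_sum]
    refine Finset.sum_congr rfl fun i _ => ?_
    rw [TensorProduct.smul_tmul', ← TensorProduct.sum_tmul, ← Finset.sum_smul, ← hb]
  · apply TensorProduct.ext'
    intro a b
    simp only [LinearMap.comp_apply, prL_tmul, map_smul, _root_.counit_tmul, smul_eq_mul, mul_comm]

lemma IsCoalgMap.prR : IsCoalgMap (prR : C ⊗[k] D →ₗ[k] D) := by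
  constructor
  · apply TensorProduct.ext'
    intro a b
    set ra := Coalgebra.Repr.arbitrary k a
    set rb := Coalgebra.Repr.arbitrary k b
    simp only [LinearMap.comp_apply, prR_tmul, map_smul, _root_.comul_tmul]
    rw [← ra.eq, ← rb.eq]
    simp only [TensorProduct.sum_tmul, TensorProduct.tmul_sum, map_sum,
      TensorProduct.tensorTensorTensorComm_tmul, TensorProduct.map_tmul, prR_tmul,
      TensorProduct.smul_tmul', TensorProduct.tmul_smul, smul_smul]
    have ha : Coalgebra.counit (R := k) a
        = ∑ i ∈ ra.index, Coalgebra.counit (R := k) (ra.right i) *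
            Coalgebra.counit (R := k) (ra.left i) := by
      conv_lhs => rw [← _root_.sum_counit_smul ra]
      simp [map_sum, smul_eq_mul, mul_comm]
    rw [Finset.smul_sum]
    refine Finset.sum_congr rfl fun j _ => ?_
    rw [TensorProduct.smul_tmul', ← TensorProduct.sum_tmul, ← Finset.sum_smul, ← ha]
  · apply TensorProduct.ext'
    intro a b
    simp only [LinearMap.comp_apply, prR_tmul, map_smul, _root_.counit_tmul, smul_eq_mul]

lemma IsCoalgMap.tmulMap {φ : C →ₗ[k] D} {ψ : E →ₗ[k] M} [Coalgebra k M]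
    (hφ : IsCoalgMap φ) (hψ : IsCoalgMap ψ) :
    IsCoalgMap (TensorProduct.map φ ψ : C ⊗[k] E →ₗ[k] D ⊗[k] M) := by
  constructor
  · apply TensorProduct.ext'
    intro a b
    set ra := Coalgebra.Repr.arbitrary k a
    set rb := Coalgebra.Repr.arbitrary k b
    have ha : Coalgebra.comul (R := k) (φ a) = ∑ i ∈ ra.index, φ (ra.left i) ⊗ₜ[k] φ (ra.right i) := by
      have := congrArg (fun m => (Coalgebra.comul ∘ₗ φ) m) (rfl : a = a)
      calc Coalgebra.comul (R := k) (φ a) = (TensorProduct.map φ φ ∘ₗ Coalgebra.comul) a := by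
            rw [← hφ.comul_comp]; rfl
        _ = _ := by rw [LinearMap.comp_apply, ← ra.eq, map_sum]; simp
    have hb : Coalgebra.comul (R := k) (ψ b) = ∑ j ∈ rb.index, ψ (rb.left j) ⊗ₜ[k] ψ (rb.right j) := by
      calc Coalgebra.comul (R := k) (ψ b) = (TensorProduct.map ψ ψ ∘ₗ Coalgebra.comul) b := by
            rw [← hψ.comul_comp]; rfl
        _ = _ := by rw [LinearMap.comp_apply, ← rb.eq, map_sum]; simp
    simp only [LinearMap.comp_apply, TensorProduct.map_tmul, _root_.comul_tmul, ha, hb, ← ra.eq, ← rb.eq]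
    simp only [TensorProduct.sum_tmul, TensorProduct.tmul_sum, map_sum,
      TensorProduct.tensorTensorTensorComm_tmul, TensorProduct.map_tmul]
  · apply TensorProduct.ext'
    intro a b
    have ha : Coalgebra.counit (R := k) (φ a) = Coalgebra.counit (R := k) a := by
      rw [← hφ.counit_comp]; rfl
    have hb : Coalgebra.counit (R := k) (ψ b) = Coalgebra.counit (R := k) b := by
      rw [← hψ.counit_comp]; rfl
    simp only [LinearMap.comp_apply, TensorProduct.map_tmul, _root_.counit_tmul, ha, hb]

lemma IsCoalgMap.assocSymm :
    IsCoalgMap ((TensorProduct.assoc k C D E).symm.toLinearMap) := by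
  refine IsCoalgMap.congr ?_ (IsCoalgMap.ofCoalgHom
    ((Coalgebra.TensorProduct.assoc k k C D E).symm.toCoalgHom))
  apply TensorProduct.ext'
  intro a yz
  induction yz using TensorProduct.induction_on with
  | zero => simp
  | tmul y z =>
    simp [Coalgebra.TensorProduct.assoc_symm_tmul]
  | add u v hu hv => simp_all [TensorProduct.tmul_add]

/-- factorization: `(a ⊗ b ↦ f a * g b)` as a convolution. -/
lemma mul_map_eq_conv (f : C →ₗ[k] k) (g : D →ₗ[k] k) :
    LinearMap.mul' k k ∘ₗ TensorProduct.map f g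
      = conv (f ∘ₗ (prL : C ⊗[k] D →ₗ[k] C)) (g ∘ₗ (prR : C ⊗[k] D →ₗ[k] D)) := by
  apply TensorProduct.ext'
  intro a b
  set ra := Coalgebra.Repr.arbitrary k a
  set rb := Coalgebra.Repr.arbitrary k b
  rw [conv_tmul_repr _ _ ra rb]
  simp only [LinearMap.comp_apply, TensorProduct.map_tmul, LinearMap.mul'_apply,
    prL_tmul, prR_tmul, map_smul, smul_eq_mul]
  calc f a * g b
      = (∑ i ∈ ra.index, f (ra.left i) * Coalgebra.counit (R := k) (ra.right i)) *
        (∑ j ∈ rb.index, Coalgebra.counit (R := k) (rb.left j) * g (rb.right j)) := by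
        congr 1
        · conv_lhs => rw [← sum_smul_counit ra]
          simp [map_sum, smul_eq_mul, mul_comm]
        · conv_lhs => rw [← _root_.sum_counit_smul rb]
          simp [map_sum, smul_eq_mul]
    _ = _ := by
        rw [Finset.sum_mul_sum]
        refine Finset.sum_congr rfl fun i _ => Finset.sum_congr rfl fun j _ => ?_
        ring
end Tools3
section Tools4

variable {k : Type u} [CommRing k]

open Coalgebra

lemma ext_threefold_right {C D E Q : Type u} [AddCommGroup C] [Module k C]
    [AddCommGroup D] [Module k D] [AddCommGroup E] [Module k E] [AddCommGroup Q] [Module k Q]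
    {g h : C ⊗[k] (D ⊗[k] E) →ₗ[k] Q}
    (hyp : ∀ x y z, g (x ⊗ₜ[k] (y ⊗ₜ[k] z)) = h (x ⊗ₜ[k] (y ⊗ₜ[k] z))) : g = h := by
  apply TensorProduct.ext'
  intro x yz
  induction yz using TensorProduct.induction_on with
  | zero => simp
  | tmul y z => exact hyp x y z
  | add u v hu hv => rw [TensorProduct.tmul_add, map_add, map_add, hu, hv]

variable {H : Type u} [Ring H] [Bialgebra k H]

lemma IsCoalgMap.mulHMap : IsCoalgMap (mulH : H ⊗[k] H →ₗ[k] H) := by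
  constructor
  · apply TensorProduct.ext'
    intro a b
    set ra := Coalgebra.Repr.arbitrary k a
    set rb := Coalgebra.Repr.arbitrary k b
    have hL : (Coalgebra.comul ∘ₗ (mulH : H ⊗[k] H →ₗ[k] H)) (a ⊗ₜ[k] b)
        = ∑ i ∈ ra.index, ∑ j ∈ rb.index,
            (ra.left i * rb.left j) ⊗ₜ[k] (ra.right i * rb.right j) := by
      simp only [LinearMap.comp_apply, mulH, LinearMap.mul'_apply, Bialgebra.comul_mul]
      rw [← ra.eq, ← rb.eq, Finset.sum_mul_sum]
      simp only [Algebra.TensorProduct.tmul_mul_tmul]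
    have hR : (TensorProduct.map (mulH : H ⊗[k] H →ₗ[k] H) mulH ∘ₗ Coalgebra.comul) (a ⊗ₜ[k] b)
        = ∑ i ∈ ra.index, ∑ j ∈ rb.index,
            (ra.left i * rb.left j) ⊗ₜ[k] (ra.right i * rb.right j) := by
      simp only [LinearMap.comp_apply, _root_.comul_tmul]
      rw [← ra.eq, ← rb.eq]
      simp only [TensorProduct.sum_tmul, TensorProduct.tmul_sum, map_sum,
        TensorProduct.tensorTensorTensorComm_tmul, TensorProduct.map_tmul, mulH,
        LinearMap.mul'_apply]
      rw [Finset.sum_comm]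
    rw [hL, hR]
  · apply TensorProduct.ext'
    intro a b
    simp only [LinearMap.comp_apply, mulH, LinearMap.mul'_apply, Bialgebra.counit_mul,
      _root_.counit_tmul]

lemma IsCoalgMap.inc1 : IsCoalgMap ((TensorProduct.mk k H H) 1) := by
  constructor
  · ext h
    set rh := Coalgebra.Repr.arbitrary k h
    have hL : (Coalgebra.comul ∘ₗ (TensorProduct.mk k H H) 1) h
        = ∑ i ∈ rh.index, (1 ⊗ₜ[k] rh.left i) ⊗ₜ[k] (1 ⊗ₜ[k] rh.right i) := by
      simp only [LinearMap.comp_apply, TensorProduct.mk_apply, _root_.comul_tmul,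
        Bialgebra.comul_one, Algebra.TensorProduct.one_def]
      rw [← rh.eq]
      simp only [TensorProduct.tmul_sum, map_sum,
        TensorProduct.tensorTensorTensorComm_tmul]
    rw [hL]
    simp only [LinearMap.comp_apply, ← rh.eq, map_sum, TensorProduct.map_tmul,
      TensorProduct.mk_apply]
  · ext h
    simp only [LinearMap.comp_apply, TensorProduct.mk_apply, _root_.counit_tmul,
      Bialgebra.counit_one, one_mul]

lemma IsCoalgMap.inc2 : IsCoalgMap ((TensorProduct.mk k H H).flip 1) := by
  constructor
  · ext h
    set rh := Coalgebra.Repr.arbitrary k h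
    have hL : (Coalgebra.comul ∘ₗ (TensorProduct.mk k H H).flip 1) h
        = ∑ i ∈ rh.index, (rh.left i ⊗ₜ[k] 1) ⊗ₜ[k] (rh.right i ⊗ₜ[k] 1) := by
      simp only [LinearMap.comp_apply, LinearMap.flip_apply, TensorProduct.mk_apply, _root_.comul_tmul,
        Bialgebra.comul_one, Algebra.TensorProduct.one_def]
      rw [← rh.eq]
      simp only [TensorProduct.sum_tmul, map_sum,
        TensorProduct.tensorTensorTensorComm_tmul]
    rw [hL]
    simp only [LinearMap.comp_apply, ← rh.eq, map_sum, TensorProduct.map_tmul,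
      LinearMap.flip_apply, TensorProduct.mk_apply]
  · ext h
    simp only [LinearMap.comp_apply, LinearMap.flip_apply, TensorProduct.mk_apply, _root_.counit_tmul,
      Bialgebra.counit_one, mul_one]

/-- cancellation after precomposition with a coalgebra map -/
lemma conv_cancel_comp {C D : Type u} [AddCommGroup C] [Module k C] [Coalgebra k C]
    [AddCommGroup D] [Module k D] [Coalgebra k D] {φ : C →ₗ[k] D} (hφ : IsCoalgMap φ)
    {f g : D →ₗ[k] k} (hfg : conv f g = (Coalgebra.counit : D →ₗ[k] k)) :
    conv (f ∘ₗ φ) (g ∘ₗ φ) = (Coalgebra.counit : C →ₗ[k] k) := by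
  rw [← conv_comp hφ, hfg, hφ.counit_comp]

variable {C : Type u} [AddCommGroup C] [Module k C] [Coalgebra k C]

lemma conv_mid_cancel {f g : C →ₗ[k] k}
    (hfg : conv f g = (Coalgebra.counit : C →ₗ[k] k)) (X Y : C →ₗ[k] k) :
    conv X (conv f (conv g Y)) = conv X Y := by
  rw [← conv_assoc f g Y, hfg, conv_counit_left]

lemma conv_head_cancel {f g : C →ₗ[k] k}
    (hfg : conv f g = (Coalgebra.counit : C →ₗ[k] k)) (Y : C →ₗ[k] k) :
    conv f (conv g Y) = Y := by
  rw [← conv_assoc f g Y, hfg, conv_counit_left]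

lemma IsLazyF.left_comm {σ : C →ₗ[k] k} (hσ : IsLazyF σ) (X Y : C →ₗ[k] k) :
    conv σ (conv X Y) = conv X (conv σ Y) := by
  rw [← conv_assoc, ← conv_assoc, hσ.comm X]

lemma rel_conv {M : Type u} [AddCommGroup M] [Module k M] {σ τ : C →ₗ[k] k} {μ : C →ₗ[k] M}
    (hσ : convl σ μ = convr μ σ) (hτ : convl τ μ = convr μ τ) :
    convl (conv σ τ) μ = convr μ (conv σ τ) := by
  rw [convl_conv, hτ, convl_convr, hσ, ← convr_conv]

end Tools4

/-- If `γ : H → k` is a normalized convolution-invertible neat lazy map on a Hopf algebra,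
then `D¹(γ)` is a neat lazy 2-cocycle: normalized, convolution invertible, lazy, a left
2-cocycle, and neat. -/
theorem stmt18 {k : Type u} [Field k] {H : Type u} [Ring H] [HopfAlgebra k H]
    (γ γinv : H →ₗ[k] k) (hn : γ 1 = 1)
    (hinv1 : conv γ γinv = (Coalgebra.counit : H →ₗ[k] k))
    (hinv2 : conv γinv γ = (Coalgebra.counit : H →ₗ[k] k))
    (hlazy : IsLazy1 γ) (hneat : Neat1 γ) :
    Normalized (D1 γ γinv) ∧
    (∃ τ : H ⊗[k] H →ₗ[k] k, conv (D1 γ γinv) τ = (Coalgebra.counit : H ⊗[k] H →ₗ[k] k) ∧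
      conv τ (D1 γ γinv) = (Coalgebra.counit : H ⊗[k] H →ₗ[k] k)) ∧
    IsLazy2 (D1 γ γinv) ∧ IsLeftCocycle (D1 γ γinv) ∧ Neat2 (D1 γ γinv) := by
  have hγ : IsLazyF γ := hlazy
  have hδ : IsLazyF γinv := hγ.of_inv hinv1 hinv2
  -- coalgebra maps
  have hmul : IsCoalgMap (mulH : H ⊗[k] H →ₗ[k] H) := IsCoalgMap.mulHMap
  have hprL2 : IsCoalgMap (prL : H ⊗[k] H →ₗ[k] H) := IsCoalgMap.prL
  have hprR2 : IsCoalgMap (prR : H ⊗[k] H →ₗ[k] H) := IsCoalgMap.prR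
  have hpr1 : (pr1 : H ⊗[k] H →ₗ[k] H) = prL := rfl
  have hdrop : (dropL3 : H ⊗[k] (H ⊗[k] H) →ₗ[k] H ⊗[k] H) = prR := rfl
  have hq1 : IsCoalgMap (TensorProduct.map (LinearMap.id : H →ₗ[k] H) (pr1 : H ⊗[k] H →ₗ[k] H)) := by
    rw [hpr1]; exact IsCoalgMap.tmulMap IsCoalgMap.id IsCoalgMap.prL
  have hq2 : IsCoalgMap (TensorProduct.map (mulH : H ⊗[k] H →ₗ[k] H) (LinearMap.id : H →ₗ[k] H)
      ∘ₗ (TensorProduct.assoc k H H H).symm.toLinearMap) :=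
    (IsCoalgMap.tmulMap hmul IsCoalgMap.id).comp IsCoalgMap.assocSymm
  have hq3 : IsCoalgMap (prR : H ⊗[k] (H ⊗[k] H) →ₗ[k] H ⊗[k] H) := IsCoalgMap.prR
  have hq4 : IsCoalgMap (TensorProduct.map (LinearMap.id : H →ₗ[k] H) (mulH : H ⊗[k] H →ₗ[k] H)) :=
    IsCoalgMap.tmulMap IsCoalgMap.id hmul
  -- factorization of D1
  have hEfac : LinearMap.mul' k k ∘ₗ TensorProduct.map γ γ
      = conv (γ ∘ₗ (prL : H ⊗[k] H →ₗ[k] H)) (γ ∘ₗ prR) := mul_map_eq_conv γ γ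
  have hD1 : D1 γ γinv = conv (conv (γ ∘ₗ (prL : H ⊗[k] H →ₗ[k] H)) (γ ∘ₗ prR)) (γinv ∘ₗ mulH) := by
    rw [D1, hEfac]
  -- cancellation pairs
  have hcm : conv (γ ∘ₗ (mulH : H ⊗[k] H →ₗ[k] H)) (γinv ∘ₗ mulH)
      = (Coalgebra.counit : H ⊗[k] H →ₗ[k] k) := conv_cancel_comp hmul hinv1
  have hcm' : conv (γinv ∘ₗ (mulH : H ⊗[k] H →ₗ[k] H)) (γ ∘ₗ mulH)
      = (Coalgebra.counit : H ⊗[k] H →ₗ[k] k) := conv_cancel_comp hmul hinv2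
  refine ⟨?_, ?_, ?_, ?_, ?_⟩
  · -- Normalized
    have hA1 : (LinearMap.mul' k k ∘ₗ TensorProduct.map γ γ) ∘ₗ (TensorProduct.mk k H H) 1 = γ := by
      ext h
      simp [hn]
    have hB1 : ((γinv ∘ₗ (mulH : H ⊗[k] H →ₗ[k] H))) ∘ₗ (TensorProduct.mk k H H) 1 = γinv := by
      ext h
      simp [mulH]
    have h1 : D1 γ γinv ∘ₗ (TensorProduct.mk k H H) 1 = (Coalgebra.counit : H →ₗ[k] k) := by
      rw [D1, conv_comp IsCoalgMap.inc1, hA1, hB1, hinv1]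
    have hA2 : (LinearMap.mul' k k ∘ₗ TensorProduct.map γ γ) ∘ₗ (TensorProduct.mk k H H).flip 1
        = γ := by
      ext h
      simp [hn]
    have hB2 : ((γinv ∘ₗ (mulH : H ⊗[k] H →ₗ[k] H))) ∘ₗ (TensorProduct.mk k H H).flip 1 = γinv := by
      ext h
      simp [mulH]
    have h2 : D1 γ γinv ∘ₗ (TensorProduct.mk k H H).flip 1 = (Coalgebra.counit : H →ₗ[k] k) := by
      rw [D1, conv_comp IsCoalgMap.inc2, hA2, hB2, hinv1]
    intro h
    constructor
    · simpa using LinearMap.congr_fun h1 h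
    · simpa using LinearMap.congr_fun h2 h
  · -- convolution inverse
    refine ⟨conv (γ ∘ₗ mulH) (conv (γinv ∘ₗ prR) (γinv ∘ₗ prL)), ?_, ?_⟩
    · rw [hD1]
      simp only [conv_assoc]
      rw [conv_head_cancel hcm' (conv (γinv ∘ₗ prR) (γinv ∘ₗ prL))]
      rw [conv_head_cancel (conv_cancel_comp hprR2 hinv1) (γinv ∘ₗ prL)]
      exact conv_cancel_comp hprL2 hinv1
    · rw [hD1]
      simp only [conv_assoc]
      rw [conv_head_cancel (conv_cancel_comp hprL2 hinv2)
        (conv (γ ∘ₗ (prR : H ⊗[k] H →ₗ[k] H)) (γinv ∘ₗ mulH))]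
      rw [conv_head_cancel (conv_cancel_comp hprR2 hinv2) (γinv ∘ₗ mulH)]
      exact hcm
  · -- IsLazy2
    show convl (D1 γ γinv) mulH = convr mulH (D1 γ γinv)
    rw [hD1]
    refine rel_conv (rel_conv ((hγ.compPrL).rel mulH) ((hγ.compPrR).rel mulH)) ?_
    have h := rel_comp hmul (hδ : convl γinv LinearMap.id = convr LinearMap.id γinv)
    rwa [LinearMap.id_comp] at h
  · -- IsLeftCocycle
    have hg1 : IsLazyF (γ ∘ₗ (prL : H ⊗[k] (H ⊗[k] H) →ₗ[k] H)) := hγ.compPrL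
    have hg2 : IsLazyF ((γ ∘ₗ (prL : H ⊗[k] H →ₗ[k] H)) ∘ₗ
        (prR : H ⊗[k] (H ⊗[k] H) →ₗ[k] H ⊗[k] H)) := (hγ.compPrL).compPrR
    have hg3 : IsLazyF ((γ ∘ₗ (prR : H ⊗[k] H →ₗ[k] H)) ∘ₗ
        (prR : H ⊗[k] (H ⊗[k] H) →ₗ[k] H ⊗[k] H)) := (hγ.compPrR).compPrR
    have hDq1 : D1 γ γinv ∘ₗ TensorProduct.map LinearMap.id pr1
        = conv (conv (γ ∘ₗ prL) ((γ ∘ₗ prL) ∘ₗ prR))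
            ((γinv ∘ₗ mulH) ∘ₗ TensorProduct.map LinearMap.id pr1) := by
      rw [D1, conv_comp hq1]
      congr 1
      have hstep : (LinearMap.mul' k k ∘ₗ TensorProduct.map γ γ) ∘ₗ
          TensorProduct.map (LinearMap.id : H →ₗ[k] H) (pr1 : H ⊗[k] H →ₗ[k] H)
          = LinearMap.mul' k k ∘ₗ TensorProduct.map γ (γ ∘ₗ prL) := by
        apply TensorProduct.ext'
        intro a y
        simp [hpr1]
      rw [hstep, mul_map_eq_conv γ (γ ∘ₗ prL)]
    have hDq3 : D1 γ γinv ∘ₗ dropL3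
        = conv (conv ((γ ∘ₗ prL) ∘ₗ prR) ((γ ∘ₗ prR) ∘ₗ prR))
            ((γinv ∘ₗ mulH) ∘ₗ (prR : H ⊗[k] (H ⊗[k] H) →ₗ[k] H ⊗[k] H)) := by
      rw [D1, hdrop, conv_comp hq3, hEfac, conv_comp hq3]
    have hdumu : conv ((γinv ∘ₗ mulH) ∘ₗ TensorProduct.map (LinearMap.id : H →ₗ[k] H) pr1)
        ((γ ∘ₗ mulH) ∘ₗ TensorProduct.map (LinearMap.id : H →ₗ[k] H) pr1)
        = (Coalgebra.counit : H ⊗[k] (H ⊗[k] H) →ₗ[k] k) := conv_cancel_comp hq1 hcm'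
    have hdvmv : conv ((γinv ∘ₗ mulH) ∘ₗ (prR : H ⊗[k] (H ⊗[k] H) →ₗ[k] H ⊗[k] H))
        ((γ ∘ₗ mulH) ∘ₗ prR) = (Coalgebra.counit : H ⊗[k] (H ⊗[k] H) →ₗ[k] k) :=
      conv_cancel_comp hq3 hcm'
    have hmudu : conv ((γ ∘ₗ mulH) ∘ₗ TensorProduct.map (LinearMap.id : H →ₗ[k] H) pr1)
        ((γinv ∘ₗ mulH) ∘ₗ TensorProduct.map (LinearMap.id : H →ₗ[k] H) pr1)
        = (Coalgebra.counit : H ⊗[k] (H ⊗[k] H) →ₗ[k] k) := conv_cancel_comp hq1 hcm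
    have hmvdv : conv ((γ ∘ₗ mulH) ∘ₗ (prR : H ⊗[k] (H ⊗[k] H) →ₗ[k] H ⊗[k] H))
        ((γinv ∘ₗ mulH) ∘ₗ prR) = (Coalgebra.counit : H ⊗[k] (H ⊗[k] H) →ₗ[k] k) :=
      conv_cancel_comp hq3 hcm
    have hDq2 : D1 γ γinv ∘ₗ (TensorProduct.map mulH LinearMap.id ∘ₗ
          (TensorProduct.assoc k H H H).symm.toLinearMap)
        = conv (conv ((γ ∘ₗ mulH) ∘ₗ TensorProduct.map LinearMap.id pr1)
              ((γ ∘ₗ prR) ∘ₗ prR))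
            ((γinv ∘ₗ mulH) ∘ₗ TensorProduct.map LinearMap.id mulH) := by
      rw [D1, conv_comp hq2]
      have hstepA : (LinearMap.mul' k k ∘ₗ TensorProduct.map γ γ) ∘ₗ
          (TensorProduct.map (mulH : H ⊗[k] H →ₗ[k] H) LinearMap.id ∘ₗ
            (TensorProduct.assoc k H H H).symm.toLinearMap)
          = (LinearMap.mul' k k ∘ₗ TensorProduct.map (γ ∘ₗ mulH) γ) ∘ₗ
              (TensorProduct.assoc k H H H).symm.toLinearMap := by
        apply ext_threefold_right
        intro x y z
        simp
      have hid1 : ((γ ∘ₗ mulH) ∘ₗ (prL : (H ⊗[k] H) ⊗[k] H →ₗ[k] H ⊗[k] H)) ∘ₗ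
          (TensorProduct.assoc k H H H).symm.toLinearMap
          = (γ ∘ₗ mulH) ∘ₗ TensorProduct.map (LinearMap.id : H →ₗ[k] H) pr1 := by
        apply ext_threefold_right
        intro x y z
        simp [mulH, hpr1, TensorProduct.smul_tmul']
      have hid2 : (γ ∘ₗ (prR : (H ⊗[k] H) ⊗[k] H →ₗ[k] H)) ∘ₗ
          (TensorProduct.assoc k H H H).symm.toLinearMap
          = (γ ∘ₗ (prR : H ⊗[k] H →ₗ[k] H)) ∘ₗ (prR : H ⊗[k] (H ⊗[k] H) →ₗ[k] H ⊗[k] H) := by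
        apply ext_threefold_right
        intro x y z
        simp [_root_.counit_tmul, mul_smul, mul_left_comm]
      have hstepB : (γinv ∘ₗ mulH) ∘ₗ (TensorProduct.map (mulH : H ⊗[k] H →ₗ[k] H)
            LinearMap.id ∘ₗ (TensorProduct.assoc k H H H).symm.toLinearMap)
          = (γinv ∘ₗ mulH) ∘ₗ TensorProduct.map (LinearMap.id : H →ₗ[k] H) mulH := by
        apply ext_threefold_right
        intro x y z
        simp [mulH, mul_assoc]
      rw [hstepA, hstepB]
      congr 1
      rw [mul_map_eq_conv (γ ∘ₗ mulH) γ, conv_comp IsCoalgMap.assocSymm, hid1, hid2]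
    have hDq4 : D1 γ γinv ∘ₗ TensorProduct.map LinearMap.id mulH
        = conv (conv (γ ∘ₗ prL) ((γ ∘ₗ mulH) ∘ₗ (prR : H ⊗[k] (H ⊗[k] H) →ₗ[k] H ⊗[k] H)))
            ((γinv ∘ₗ mulH) ∘ₗ TensorProduct.map LinearMap.id mulH) := by
      rw [D1, conv_comp hq4]
      congr 1
      have hstep : (LinearMap.mul' k k ∘ₗ TensorProduct.map γ γ) ∘ₗ
          TensorProduct.map (LinearMap.id : H →ₗ[k] H) (mulH : H ⊗[k] H →ₗ[k] H)
          = LinearMap.mul' k k ∘ₗ TensorProduct.map γ (γ ∘ₗ mulH) := by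
        apply TensorProduct.ext'
        intro a y
        simp
      rw [hstep, mul_map_eq_conv γ (γ ∘ₗ mulH)]
    show conv _ _ = conv _ _
    rw [hDq1, hDq2, hDq3, hDq4]
    simp only [conv_assoc]
    rw [conv_head_cancel hdumu]
    rw [← hg1.left_comm ((γinv ∘ₗ mulH) ∘ₗ (prR : H ⊗[k] (H ⊗[k] H) →ₗ[k] H ⊗[k] H))]
    rw [conv_head_cancel hdvmv]
    rw [hg1.left_comm ((γ ∘ₗ prL) ∘ₗ prR), hg1.left_comm ((γ ∘ₗ prR) ∘ₗ prR)]
  · -- Neat2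
    have hg1 : IsLazyF (γ ∘ₗ (prL : H ⊗[k] (H ⊗[k] H) →ₗ[k] H)) := hγ.compPrL
    have hg2 : IsLazyF ((γ ∘ₗ (prL : H ⊗[k] H →ₗ[k] H)) ∘ₗ
        (prR : H ⊗[k] (H ⊗[k] H) →ₗ[k] H ⊗[k] H)) := (hγ.compPrL).compPrR
    have hg3 : IsLazyF ((γ ∘ₗ (prR : H ⊗[k] H →ₗ[k] H)) ∘ₗ
        (prR : H ⊗[k] (H ⊗[k] H) →ₗ[k] H ⊗[k] H)) := (hγ.compPrR).compPrR
    have hDq1 : D1 γ γinv ∘ₗ TensorProduct.map LinearMap.id pr1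
        = conv (conv (γ ∘ₗ prL) ((γ ∘ₗ prL) ∘ₗ prR))
            ((γinv ∘ₗ mulH) ∘ₗ TensorProduct.map LinearMap.id pr1) := by
      rw [D1, conv_comp hq1]
      congr 1
      have hstep : (LinearMap.mul' k k ∘ₗ TensorProduct.map γ γ) ∘ₗ
          TensorProduct.map (LinearMap.id : H →ₗ[k] H) (pr1 : H ⊗[k] H →ₗ[k] H)
          = LinearMap.mul' k k ∘ₗ TensorProduct.map γ (γ ∘ₗ prL) := by
        apply TensorProduct.ext'
        intro a y
        simp [hpr1]
      rw [hstep, mul_map_eq_conv γ (γ ∘ₗ prL)]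
    have hDq3 : D1 γ γinv ∘ₗ dropL3
        = conv (conv ((γ ∘ₗ prL) ∘ₗ prR) ((γ ∘ₗ prR) ∘ₗ prR))
            ((γinv ∘ₗ mulH) ∘ₗ (prR : H ⊗[k] (H ⊗[k] H) →ₗ[k] H ⊗[k] H)) := by
      rw [D1, hdrop, conv_comp hq3, hEfac, conv_comp hq3]
    have hdumu : conv ((γinv ∘ₗ mulH) ∘ₗ TensorProduct.map (LinearMap.id : H →ₗ[k] H) pr1)
        ((γ ∘ₗ mulH) ∘ₗ TensorProduct.map (LinearMap.id : H →ₗ[k] H) pr1)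
        = (Coalgebra.counit : H ⊗[k] (H ⊗[k] H) →ₗ[k] k) := conv_cancel_comp hq1 hcm'
    have hdvmv : conv ((γinv ∘ₗ mulH) ∘ₗ (prR : H ⊗[k] (H ⊗[k] H) →ₗ[k] H ⊗[k] H))
        ((γ ∘ₗ mulH) ∘ₗ prR) = (Coalgebra.counit : H ⊗[k] (H ⊗[k] H) →ₗ[k] k) :=
      conv_cancel_comp hq3 hcm'
    have hmudu : conv ((γ ∘ₗ mulH) ∘ₗ TensorProduct.map (LinearMap.id : H →ₗ[k] H) pr1)
        ((γinv ∘ₗ mulH) ∘ₗ TensorProduct.map (LinearMap.id : H →ₗ[k] H) pr1)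
        = (Coalgebra.counit : H ⊗[k] (H ⊗[k] H) →ₗ[k] k) := conv_cancel_comp hq1 hcm
    have hmvdv : conv ((γ ∘ₗ mulH) ∘ₗ (prR : H ⊗[k] (H ⊗[k] H) →ₗ[k] H ⊗[k] H))
        ((γinv ∘ₗ mulH) ∘ₗ prR) = (Coalgebra.counit : H ⊗[k] (H ⊗[k] H) →ₗ[k] k) :=
      conv_cancel_comp hq3 hcm
    have hneat' : conv ((γ ∘ₗ mulH) ∘ₗ TensorProduct.map (LinearMap.id : H →ₗ[k] H) pr1)
          ((γ ∘ₗ mulH) ∘ₗ (prR : H ⊗[k] (H ⊗[k] H) →ₗ[k] H ⊗[k] H))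
        = conv ((γ ∘ₗ mulH) ∘ₗ (prR : H ⊗[k] (H ⊗[k] H) →ₗ[k] H ⊗[k] H))
          ((γ ∘ₗ mulH) ∘ₗ TensorProduct.map (LinearMap.id : H →ₗ[k] H) pr1) := by
      have e1 : γ ∘ₗ mulH ∘ₗ TensorProduct.map (LinearMap.id : H →ₗ[k] H) pr1
          = (γ ∘ₗ mulH) ∘ₗ TensorProduct.map (LinearMap.id : H →ₗ[k] H) pr1 :=
        (LinearMap.comp_assoc _ _ _).symm
      have e2 : γ ∘ₗ mulH ∘ₗ dropL3
          = (γ ∘ₗ mulH) ∘ₗ (prR : H ⊗[k] (H ⊗[k] H) →ₗ[k] H ⊗[k] H) :=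
        (LinearMap.comp_assoc _ _ _).symm
      rw [← e1, ← e2]
      exact hneat
    have hxw : conv (conv ((γinv ∘ₗ mulH) ∘ₗ TensorProduct.map (LinearMap.id : H →ₗ[k] H) pr1)
            ((γinv ∘ₗ mulH) ∘ₗ (prR : H ⊗[k] (H ⊗[k] H) →ₗ[k] H ⊗[k] H)))
          (conv ((γ ∘ₗ mulH) ∘ₗ (prR : H ⊗[k] (H ⊗[k] H) →ₗ[k] H ⊗[k] H))
            ((γ ∘ₗ mulH) ∘ₗ TensorProduct.map (LinearMap.id : H →ₗ[k] H) pr1))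
        = (Coalgebra.counit : H ⊗[k] (H ⊗[k] H) →ₗ[k] k) := by
      rw [conv_assoc, conv_head_cancel hdvmv]
      exact hdumu
    have hwy : conv (conv ((γ ∘ₗ mulH) ∘ₗ TensorProduct.map (LinearMap.id : H →ₗ[k] H) pr1)
            ((γ ∘ₗ mulH) ∘ₗ (prR : H ⊗[k] (H ⊗[k] H) →ₗ[k] H ⊗[k] H)))
          (conv ((γinv ∘ₗ mulH) ∘ₗ (prR : H ⊗[k] (H ⊗[k] H) →ₗ[k] H ⊗[k] H))
            ((γinv ∘ₗ mulH) ∘ₗ TensorProduct.map (LinearMap.id : H →ₗ[k] H) pr1))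
        = (Coalgebra.counit : H ⊗[k] (H ⊗[k] H) →ₗ[k] k) := by
      rw [conv_assoc, conv_head_cancel hmvdv]
      exact hmudu
    have hdudv : conv ((γinv ∘ₗ mulH) ∘ₗ TensorProduct.map (LinearMap.id : H →ₗ[k] H) pr1)
          ((γinv ∘ₗ mulH) ∘ₗ (prR : H ⊗[k] (H ⊗[k] H) →ₗ[k] H ⊗[k] H))
        = conv ((γinv ∘ₗ mulH) ∘ₗ (prR : H ⊗[k] (H ⊗[k] H) →ₗ[k] H ⊗[k] H))
          ((γinv ∘ₗ mulH) ∘ₗ TensorProduct.map (LinearMap.id : H →ₗ[k] H) pr1) := by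
      calc conv ((γinv ∘ₗ mulH) ∘ₗ TensorProduct.map (LinearMap.id : H →ₗ[k] H) pr1)
            ((γinv ∘ₗ mulH) ∘ₗ (prR : H ⊗[k] (H ⊗[k] H) →ₗ[k] H ⊗[k] H))
          = conv (conv ((γinv ∘ₗ mulH) ∘ₗ TensorProduct.map (LinearMap.id : H →ₗ[k] H) pr1)
              ((γinv ∘ₗ mulH) ∘ₗ (prR : H ⊗[k] (H ⊗[k] H) →ₗ[k] H ⊗[k] H)))
              (conv (conv ((γ ∘ₗ mulH) ∘ₗ (prR : H ⊗[k] (H ⊗[k] H) →ₗ[k] H ⊗[k] H))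
                  ((γ ∘ₗ mulH) ∘ₗ TensorProduct.map (LinearMap.id : H →ₗ[k] H) pr1))
                (conv ((γinv ∘ₗ mulH) ∘ₗ (prR : H ⊗[k] (H ⊗[k] H) →ₗ[k] H ⊗[k] H))
                  ((γinv ∘ₗ mulH) ∘ₗ TensorProduct.map (LinearMap.id : H →ₗ[k] H) pr1))) := by
            rw [← hneat', hwy, conv_counit_right]
        _ = conv (conv (conv ((γinv ∘ₗ mulH) ∘ₗ TensorProduct.map (LinearMap.id : H →ₗ[k] H) pr1)
              ((γinv ∘ₗ mulH) ∘ₗ (prR : H ⊗[k] (H ⊗[k] H) →ₗ[k] H ⊗[k] H)))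
              (conv ((γ ∘ₗ mulH) ∘ₗ (prR : H ⊗[k] (H ⊗[k] H) →ₗ[k] H ⊗[k] H))
                ((γ ∘ₗ mulH) ∘ₗ TensorProduct.map (LinearMap.id : H →ₗ[k] H) pr1)))
              (conv ((γinv ∘ₗ mulH) ∘ₗ (prR : H ⊗[k] (H ⊗[k] H) →ₗ[k] H ⊗[k] H))
                ((γinv ∘ₗ mulH) ∘ₗ TensorProduct.map (LinearMap.id : H →ₗ[k] H) pr1)) := by
            simp only [conv_assoc]
        _ = _ := by rw [hxw, conv_counit_left]
    show conv _ _ = conv _ _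
    rw [hDq1, hDq3]
    simp only [conv_assoc]
    rw [← hg2.left_comm ((γinv ∘ₗ mulH) ∘ₗ TensorProduct.map LinearMap.id pr1)]
    rw [← hg3.left_comm ((γinv ∘ₗ mulH) ∘ₗ TensorProduct.map LinearMap.id pr1)]
    rw [← hg1.left_comm ((γinv ∘ₗ mulH) ∘ₗ (prR : H ⊗[k] (H ⊗[k] H) →ₗ[k] H ⊗[k] H))]
    rw [← hg2.left_comm ((γinv ∘ₗ mulH) ∘ₗ (prR : H ⊗[k] (H ⊗[k] H) →ₗ[k] H ⊗[k] H))]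
    rw [hdudv]
    conv_lhs => rw [hg1.left_comm ((γ ∘ₗ prL) ∘ₗ prR), hg1.left_comm ((γ ∘ₗ prL) ∘ₗ prR),
      hg1.left_comm ((γ ∘ₗ prR) ∘ₗ prR)]
    conv_rhs => rw [hg1.left_comm ((γ ∘ₗ prL) ∘ₗ prR)]
    conv_rhs => rw [hg3.left_comm ((γ ∘ₗ prL) ∘ₗ prR)]

end
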